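/- Let 𝒟 be a category with pullbacks and let ℰ be the category with the same objects whose morphisms D' → D are equivalence classes [φ, φ'] of spans from D' to D, with composition by pullback. Then ℰ is a groupoid: every morphism [φ, φ'] has inverse [φ', φ]. -/

import Mathlib

open CategoryTheory CategoryTheory.Limits

universe u v

variable {C : Type u} [Category.{v} C]

/-- A span from `A` to `B`: a diagram `A ← X → B`. -/
structure Span (A B : C) : Type max u v where
  apex : C
  left : apex ⟶ A
  right : apex ⟶ B

/-- One generating step of the equivalence of spans: precompose both legs with a
common map into the apex. -/
def SpanStep {A B : C} (S T : Span A B) : Prop :=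
  ∃ ρ : T.apex ⟶ S.apex, ρ ≫ S.left = T.left ∧ ρ ≫ S.right = T.right

/-- The equivalence relation on spans generated by `SpanStep`. -/
def SpanEquiv {A B : C} : Span A B → Span A B → Prop :=
  Relation.EqvGen SpanStep

/-- Composition of spans by pullback of the middle cospan. -/
noncomputable def Span.comp [HasPullbacks C] {A B D : C} (S : Span A B) (T : Span B D) :
    Span A D :=
  ⟨pullback S.right T.left, pullback.fst S.right T.left ≫ S.left,
    pullback.snd S.right T.left ≫ T.right⟩

/-- The identity span on `A`. -/
def Span.id (A : C) : Span A A := ⟨A, 𝟙 A, 𝟙 A⟩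

/-- The reverse of a span. -/
def Span.rev {A B : C} (S : Span A B) : Span B A := ⟨S.apex, S.right, S.left⟩

/-- In the category of equivalence classes of spans in a category with pullbacks,
every morphism `[φ, φ']` is invertible with inverse the reversed span `[φ', φ]`:
composing a span with its reverse is equivalent to the identity span. -/
theorem span_category_is_groupoid [HasPullbacks C] {A B : C} (S : Span A B) :
    SpanEquiv (S.comp S.rev) (Span.id A) ∧ SpanEquiv (S.rev.comp S) (Span.id B) := by
  constructor
  · -- middle span ⟨X, φ', φ'⟩
    apply Relation.EqvGen.trans _ (⟨S.apex, S.left, S.left⟩ : Span A A)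
    · apply Relation.EqvGen.rel
      refine ⟨pullback.lift (𝟙 S.apex) (𝟙 S.apex) rfl, ?_, ?_⟩ <;>
        simp [Span.comp, Span.rev]
      · erw [pullback.lift_fst_assoc, Category.id_comp]
      · erw [pullback.lift_snd_assoc, Category.id_comp]
    · apply Relation.EqvGen.symm
      apply Relation.EqvGen.rel
      exact ⟨S.left, by simp [Span.id], by simp [Span.id]⟩
  · apply Relation.EqvGen.trans _ (⟨S.apex, S.right, S.right⟩ : Span B B)
    · apply Relation.EqvGen.rel
      refine ⟨pullback.lift (𝟙 S.apex) (𝟙 S.apex) rfl, ?_, ?_⟩ <;>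
        simp [Span.comp, Span.rev]
      · erw [pullback.lift_fst_assoc, Category.id_comp]
      · erw [pullback.lift_snd_assoc, Category.id_comp]
    · apply Relation.EqvGen.symm
      apply Relation.EqvGen.rel
      exact ⟨S.right, by simp [Span.id], by simp [Span.id]⟩
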